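/- arXiv:2412.14278 — 5 statements merged into one kernel-verified Lean document; each statement's English description precedes it below -/
import Mathlib

section
/- Let f : ℝ^d → ℝ be differentiable with L-Lipschitz gradient, let β ∈ (1/2, 1), let S ∈ ℝ^{d×p} have full column rank, and set P := S(SᵀS)⁻¹Sᵀ. Let x ∈ ℝ^d, α > β/L, and x₊ := x − α P ∇f(x). Suppose that either (i) α ≤ 1/L, or (ii) x₊ satisfies the line-search acceptance condition f(x₊) ≤ f(x) − α‖P ∇f(x)‖². Then f(x) − f(x₊) ≥ ((2β − 1)/(2L)) ‖(SᵀS)^{-1/2} Sᵀ ∇f(x)‖², where moreover ‖(SᵀS)^{-1/2} Sᵀ ∇f(x)‖² = ‖P ∇f(x)‖². -/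
open Matrix Finset

/-- The Euclidean norm on `Fin n → ℝ`. -/
noncomputable def euclNorm {n : ℕ} (v : Fin n → ℝ) : ℝ := Real.sqrt (∑ i, v i ^ 2)

open scoped ComplexOrder in
/-- The positive semidefinite square root of a positive semidefinite matrix (as in the older
Mathlib, where it was `Matrix.PosSemidef.sqrt`). -/
noncomputable def Matrix.PosSemidef.sqrt {n 𝕜 : Type*} [Fintype n] [RCLike 𝕜] [DecidableEq n]
    {A : Matrix n n 𝕜} (hA : A.PosSemidef) : Matrix n n 𝕜 :=
  hA.isHermitian.eigenvectorUnitary.1 * diagonal ((↑) ∘ (Real.sqrt ∘ hA.isHermitian.eigenvalues)) *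
  (star hA.isHermitian.eigenvectorUnitary : Matrix n n 𝕜)

lemma psd_sqrt_mul_self {n : Type*} [Fintype n] [DecidableEq n] {A : Matrix n n ℝ}
    (hA : A.PosSemidef) : hA.sqrt * hA.sqrt = A := by
  have hU : (star hA.isHermitian.eigenvectorUnitary : Matrix n n ℝ) *
      hA.isHermitian.eigenvectorUnitary.1 = 1 := Unitary.coe_star_mul_self _
  have hD : diagonal ((RCLike.ofReal : ℝ → ℝ) ∘ (Real.sqrt ∘ hA.isHermitian.eigenvalues)) *
      diagonal ((RCLike.ofReal : ℝ → ℝ) ∘ (Real.sqrt ∘ hA.isHermitian.eigenvalues)) =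
      diagonal (RCLike.ofReal ∘ hA.isHermitian.eigenvalues) := by
    rw [diagonal_mul_diagonal]
    congr 1; funext i
    simp [Real.mul_self_sqrt (hA.eigenvalues_nonneg i)]
  conv_rhs => rw [hA.isHermitian.spectral_theorem, Unitary.conjStarAlgAut_apply]
  unfold Matrix.PosSemidef.sqrt
  calc _ = hA.isHermitian.eigenvectorUnitary.1 *
        (diagonal ((RCLike.ofReal : ℝ → ℝ) ∘ (Real.sqrt ∘ hA.isHermitian.eigenvalues)) *
        ((star hA.isHermitian.eigenvectorUnitary : Matrix n n ℝ) *
      hA.isHermitian.eigenvectorUnitary.1) *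
        diagonal ((RCLike.ofReal : ℝ → ℝ) ∘ (Real.sqrt ∘ hA.isHermitian.eigenvalues))) *
        (star hA.isHermitian.eigenvectorUnitary : Matrix n n ℝ) := by
        simp only [Matrix.mul_assoc]
    _ = _ := by rw [hU, Matrix.mul_one, hD]

lemma psd_sqrt_transpose {n : Type*} [Fintype n] [DecidableEq n] {A : Matrix n n ℝ}
    (hA : A.PosSemidef) : hA.sqrtᵀ = hA.sqrt := by
  rw [← Matrix.conjTranspose_eq_transpose_of_trivial]
  unfold Matrix.PosSemidef.sqrt
  simp [Matrix.conjTranspose_mul, Matrix.mul_assoc, Matrix.star_eq_conjTranspose]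

lemma euclNorm_nonneg {n : ℕ} (v : Fin n → ℝ) : 0 ≤ euclNorm v := Real.sqrt_nonneg _

lemma euclNorm_sq {n : ℕ} (v : Fin n → ℝ) : euclNorm v ^ 2 = v ⬝ᵥ v := by
  rw [euclNorm, Real.sq_sqrt (Finset.sum_nonneg fun i _ => sq_nonneg _)]
  simp [dotProduct, sq]

lemma euclNorm_smul {n : ℕ} (c : ℝ) (v : Fin n → ℝ) :
    euclNorm (c • v) = |c| * euclNorm v := by
  simp only [euclNorm, Pi.smul_apply, smul_eq_mul, mul_pow, ← Finset.mul_sum]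
  rw [Real.sqrt_mul (sq_nonneg c), Real.sqrt_sq_eq_abs]

lemma dotProduct_le_euclNorm {n : ℕ} (v w : Fin n → ℝ) :
    v ⬝ᵥ w ≤ euclNorm v * euclNorm w := by
  have h := Finset.sum_mul_sq_le_sq_mul_sq Finset.univ v w
  calc v ⬝ᵥ w ≤ |v ⬝ᵥ w| := le_abs_self _
    _ = Real.sqrt ((v ⬝ᵥ w) ^ 2) := (Real.sqrt_sq_eq_abs _).symm
    _ ≤ Real.sqrt ((∑ i, v i ^ 2) * (∑ i, w i ^ 2)) := Real.sqrt_le_sqrt h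
    _ = euclNorm v * euclNorm w := by
        rw [Real.sqrt_mul (Finset.sum_nonneg fun i _ => sq_nonneg _)]; rfl

lemma abs_le_euclNorm {n : ℕ} (u : Fin n → ℝ) (i : Fin n) : |u i| ≤ euclNorm u := by
  rw [euclNorm, ← Real.sqrt_sq_eq_abs]
  exact Real.sqrt_le_sqrt (Finset.single_le_sum (fun j _ => sq_nonneg (u j)) (mem_univ i))

lemma euclNorm_le_sqrt_mul_norm {n : ℕ} (u : Fin n → ℝ) :
    euclNorm u ≤ Real.sqrt n * ‖u‖ := by
  have h : ∑ i, u i ^ 2 ≤ (n : ℝ) * ‖u‖ ^ 2 := by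
    calc ∑ i, u i ^ 2 ≤ ∑ _i : Fin n, ‖u‖ ^ 2 := by
          refine Finset.sum_le_sum fun i _ => ?_
          have h0 : |u i| ≤ ‖u‖ := by
            simpa [Real.norm_eq_abs] using norm_le_pi_norm u i
          calc u i ^ 2 = |u i| ^ 2 := (sq_abs _).symm
            _ ≤ ‖u‖ ^ 2 := pow_le_pow_left₀ (abs_nonneg _) h0 2
      _ = (n : ℝ) * ‖u‖ ^ 2 := by simp [Finset.sum_const, nsmul_eq_mul]
  calc euclNorm u ≤ Real.sqrt ((n : ℝ) * ‖u‖ ^ 2) := Real.sqrt_le_sqrt h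
    _ = Real.sqrt n * ‖u‖ := by
        rw [Real.sqrt_mul (Nat.cast_nonneg n), Real.sqrt_sq (norm_nonneg u)]

lemma gradf_continuous {d : ℕ} {L : ℝ} (hL : 0 ≤ L) (gradf : (Fin d → ℝ) → Fin d → ℝ)
    (hlip : ∀ x y, euclNorm (gradf x - gradf y) ≤ L * euclNorm (x - y)) :
    Continuous gradf := by
  refine (LipschitzWith.of_dist_le_mul (K := Real.toNNReal (L * Real.sqrt d))
    (f := gradf) ?_).continuous
  intro y z
  have h1 : dist (gradf y) (gradf z) ≤ euclNorm (gradf y - gradf z) := by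
    rw [dist_eq_norm]
    refine (pi_norm_le_iff_of_nonneg (euclNorm_nonneg _)).2 fun i => ?_
    simpa [Real.norm_eq_abs] using abs_le_euclNorm (gradf y - gradf z) i
  have h2 := hlip y z
  have h3 := euclNorm_le_sqrt_mul_norm (y - z)
  have h4 : (Real.toNNReal (L * Real.sqrt d) : ℝ) = L * Real.sqrt d := by
    rw [Real.coe_toNNReal]
    positivity
  rw [h4, dist_eq_norm]
  calc dist (gradf y) (gradf z) ≤ euclNorm (gradf y - gradf z) := h1
    _ ≤ L * euclNorm (y - z) := h2
    _ ≤ L * (Real.sqrt d * ‖y - z‖) := by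
        exact mul_le_mul_of_nonneg_left h3 hL
    _ = L * Real.sqrt d * ‖y - z‖ := by ring

lemma descent {d : ℕ} {L : ℝ} (hL : 0 ≤ L) (f : (Fin d → ℝ) → ℝ)
    (gradf : (Fin d → ℝ) → Fin d → ℝ) (hdiff : Differentiable ℝ f)
    (hgrad : ∀ x v, fderiv ℝ f x v = gradf x ⬝ᵥ v)
    (hlip : ∀ x y, euclNorm (gradf x - gradf y) ≤ L * euclNorm (x - y))
    (x v : Fin d → ℝ) :
    f (x + v) ≤ f x + gradf x ⬝ᵥ v + L / 2 * euclNorm v ^ 2 := by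
  set γ : ℝ → (Fin d → ℝ) := fun t => x + t • v with hγ
  have hγd : ∀ t : ℝ, HasDerivAt γ v t := fun t => by
    have h := ((hasDerivAt_id t).smul_const v).const_add x
    rw [one_smul] at h; exact h
  have hφ : ∀ t : ℝ, HasDerivAt (fun s => f (γ s)) (gradf (γ t) ⬝ᵥ v) t := fun t => by
    have h := ((hdiff (γ t)).hasFDerivAt).comp_hasDerivAt t (hγd t)
    rw [hgrad] at h; exact h
  have hcg : Continuous gradf := gradf_continuous hL gradf hlip
  have hγc : Continuous γ := by fun_prop
  have hcont : Continuous fun t => gradf (γ t) ⬝ᵥ v := by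
    simp only [dotProduct]
    exact continuous_finset_sum _ fun i _ =>
      (((continuous_apply i).comp (hcg.comp hγc)).mul continuous_const)
  have hftc : ∫ t in (0:ℝ)..1, gradf (γ t) ⬝ᵥ v = f (γ 1) - f (γ 0) :=
    intervalIntegral.integral_eq_sub_of_hasDerivAt (fun t _ => hφ t)
      (hcont.intervalIntegrable 0 1)
  have hbound : ∀ t ∈ Set.Icc (0:ℝ) 1,
      gradf (γ t) ⬝ᵥ v ≤ gradf x ⬝ᵥ v + (L * euclNorm v ^ 2) * t := by
    intro t ht
    have h1 : gradf (γ t) ⬝ᵥ v - gradf x ⬝ᵥ v = (gradf (γ t) - gradf x) ⬝ᵥ v := by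
      simp [sub_dotProduct]
    have h2 := dotProduct_le_euclNorm (gradf (γ t) - gradf x) v
    have h3 := hlip (γ t) x
    have h4 : γ t - x = t • v := by simp [hγ]
    have h5 : euclNorm (γ t - x) = t * euclNorm v := by
      rw [h4, euclNorm_smul, abs_of_nonneg ht.1]
    have h6 := euclNorm_nonneg v
    have h3' : euclNorm (gradf (γ t) - gradf x) ≤ L * (t * euclNorm v) := by
      rw [← h5]; exact h3
    calc gradf (γ t) ⬝ᵥ v = gradf x ⬝ᵥ v + (gradf (γ t) - gradf x) ⬝ᵥ v := by
          rw [← h1]; ring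
      _ ≤ gradf x ⬝ᵥ v + euclNorm (gradf (γ t) - gradf x) * euclNorm v :=
          add_le_add_right h2 _
      _ ≤ gradf x ⬝ᵥ v + L * (t * euclNorm v) * euclNorm v :=
          add_le_add_right (mul_le_mul_of_nonneg_right h3' h6) _
      _ = gradf x ⬝ᵥ v + L * euclNorm v ^ 2 * t := by ring
  have hintb : ∫ t in (0:ℝ)..1, (gradf x ⬝ᵥ v + (L * euclNorm v ^ 2) * t)
      = gradf x ⬝ᵥ v + L / 2 * euclNorm v ^ 2 := by
    rw [intervalIntegral.integral_add (intervalIntegrable_const (μ := MeasureTheory.volume))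
      ((show
        Continuous fun t : ℝ => (L * euclNorm v ^ 2) * t from continuous_const.mul continuous_id').intervalIntegrable 0 1),
      intervalIntegral.integral_const_mul, integral_id,
      intervalIntegral.integral_const]
    norm_num
    ring
  have hmono := intervalIntegral.integral_mono_on (μ := MeasureTheory.volume) (by norm_num : (0:ℝ) ≤ 1)
    (hcont.intervalIntegrable 0 1)
    ((show
      Continuous fun t : ℝ => gradf x ⬝ᵥ v + (L * euclNorm v ^ 2) * t from continuous_const.add (continuous_const.mul continuous_id')).intervalIntegrable 0 1)
    hbound
  have hγ1 : γ 1 = x + v := by simp [hγ]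
  have hγ0 : γ 0 = x := by simp [hγ]
  rw [hintb] at hmono
  rw [hftc, hγ1, hγ0] at hmono
  linarith

lemma dot_transpose_mulVec {m n : ℕ} (M : Matrix (Fin m) (Fin n) ℝ) (u : Fin n → ℝ)
    (w : Fin m → ℝ) : u ⬝ᵥ (Mᵀ *ᵥ w) = (M *ᵥ u) ⬝ᵥ w := by
  rw [Matrix.dotProduct_mulVec, Matrix.vecMul_transpose]

lemma euclNorm_mulVec_sq {m n : ℕ} (M : Matrix (Fin m) (Fin n) ℝ) (u : Fin n → ℝ) :
    euclNorm (M *ᵥ u) ^ 2 = u ⬝ᵥ ((Mᵀ * M) *ᵥ u) := by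
  rw [euclNorm_sq, ← Matrix.mulVec_mulVec, dot_transpose_mulVec, dotProduct_comm]

section matrixfacts
variable {d p : ℕ} (S : Matrix (Fin d) (Fin p) ℝ)

lemma N_isUnit (hrank : S.rank = p) : IsUnit (Sᵀ * S) := by
  rw [← Matrix.mulVec_surjective_iff_isUnit]
  have hr : (Sᵀ * S).rank = p := by rw [Matrix.rank_transpose_mul_self, hrank]
  have htop : LinearMap.range (Sᵀ * S).mulVecLin = ⊤ := by
    apply Submodule.eq_top_of_finrank_eq
    rw [Module.finrank_fin_fun]
    exact hr
  intro w
  have := LinearMap.range_eq_top.mp htop w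
  exact this

lemma N_inv_transpose : ((Sᵀ * S)⁻¹)ᵀ = (Sᵀ * S)⁻¹ := by
  rw [Matrix.transpose_nonsing_inv, Matrix.transpose_mul, Matrix.transpose_transpose]

lemma P_transpose : (S * (Sᵀ * S)⁻¹ * Sᵀ)ᵀ = S * (Sᵀ * S)⁻¹ * Sᵀ := by
  simp [Matrix.transpose_mul, N_inv_transpose, Matrix.mul_assoc]

lemma P_idem (hrank : S.rank = p) :
    (S * (Sᵀ * S)⁻¹ * Sᵀ) * (S * (Sᵀ * S)⁻¹ * Sᵀ) = S * (Sᵀ * S)⁻¹ * Sᵀ := by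
  have h := Matrix.nonsing_inv_mul (Sᵀ * S)
    ((Matrix.isUnit_iff_isUnit_det _).mp (N_isUnit S hrank))
  calc (S * (Sᵀ * S)⁻¹ * Sᵀ) * (S * (Sᵀ * S)⁻¹ * Sᵀ)
      = S * (((Sᵀ * S)⁻¹ * (Sᵀ * S)) * ((Sᵀ * S)⁻¹ * Sᵀ)) := by
        simp only [Matrix.mul_assoc]
    _ = S * (Sᵀ * S)⁻¹ * Sᵀ := by rw [h, Matrix.one_mul, Matrix.mul_assoc]

lemma sqrt_isUnit (hrank : S.rank = p) (hPSD : (Sᵀ * S).PosSemidef) : IsUnit hPSD.sqrt := by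
  rw [Matrix.isUnit_iff_isUnit_det]
  have h1 : hPSD.sqrt.det * hPSD.sqrt.det = (Sᵀ * S).det := by
    rw [← Matrix.det_mul, psd_sqrt_mul_self hPSD]
  have h2 : IsUnit (Sᵀ * S).det := (Matrix.isUnit_iff_isUnit_det _).mp (N_isUnit S hrank)
  rw [← h1] at h2
  exact isUnit_of_mul_isUnit_left h2

lemma sqrt_transpose (hPSD : (Sᵀ * S).PosSemidef) : (hPSD.sqrt)ᵀ = hPSD.sqrt := by
  exact psd_sqrt_transpose hPSD

lemma sqrt_inv_mul_self (hPSD : (Sᵀ * S).PosSemidef) : hPSD.sqrt⁻¹ * hPSD.sqrt⁻¹ = (Sᵀ * S)⁻¹ := by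
  rw [← Matrix.mul_inv_rev, psd_sqrt_mul_self hPSD]

lemma key_eq (hPSD : (Sᵀ * S).PosSemidef) (g : Fin d → ℝ) :
    euclNorm ((hPSD.sqrt⁻¹ * Sᵀ) *ᵥ g) ^ 2 = g ⬝ᵥ ((S * (Sᵀ * S)⁻¹ * Sᵀ) *ᵥ g) := by
  have hM : (hPSD.sqrt⁻¹ * Sᵀ)ᵀ * (hPSD.sqrt⁻¹ * Sᵀ) = S * (Sᵀ * S)⁻¹ * Sᵀ := by
    rw [Matrix.transpose_mul, Matrix.transpose_transpose, Matrix.transpose_nonsing_inv,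
      sqrt_transpose S hPSD]
    calc S * hPSD.sqrt⁻¹ * (hPSD.sqrt⁻¹ * Sᵀ) = S * (hPSD.sqrt⁻¹ * hPSD.sqrt⁻¹) * Sᵀ := by
          simp only [Matrix.mul_assoc]
      _ = S * (Sᵀ * S)⁻¹ * Sᵀ := by rw [sqrt_inv_mul_self S hPSD]
  rw [euclNorm_mulVec_sq, hM]

lemma key_eq' (hrank : S.rank = p) (g : Fin d → ℝ) :
    euclNorm ((S * (Sᵀ * S)⁻¹ * Sᵀ) *ᵥ g) ^ 2 = g ⬝ᵥ ((S * (Sᵀ * S)⁻¹ * Sᵀ) *ᵥ g) := by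
  rw [euclNorm_mulVec_sq, P_transpose, P_idem S hrank]

end matrixfacts


/-- Per-iteration decrease of subspace gradient descent with backtracking line search
(Lemma 2.1). -/
theorem stmt_3 (d p : ℕ) (L β α : ℝ) (hL : 0 < L) (hβ : 1 / 2 < β ∧ β < 1)
    (f : (Fin d → ℝ) → ℝ) (gradf : (Fin d → ℝ) → Fin d → ℝ)
    (hdiff : Differentiable ℝ f)
    (hgrad : ∀ x v, fderiv ℝ f x v = gradf x ⬝ᵥ v)
    (hlip : ∀ x y, euclNorm (gradf x - gradf y) ≤ L * euclNorm (x - y))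
    (S : Matrix (Fin d) (Fin p) ℝ) (hrank : S.rank = p) (hPSD : (Sᵀ * S).PosSemidef)
    (x xp : Fin d → ℝ) (hα : β / L < α)
    (hxp : xp = x - α • ((S * (Sᵀ * S)⁻¹ * Sᵀ) *ᵥ gradf x))
    (hcase : α ≤ 1 / L ∨
      f xp ≤ f x - α * euclNorm ((S * (Sᵀ * S)⁻¹ * Sᵀ) *ᵥ gradf x) ^ 2) :
    f x - f xp ≥ (2 * β - 1) / (2 * L) * euclNorm ((hPSD.sqrt⁻¹ * Sᵀ) *ᵥ gradf x) ^ 2 ∧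
    euclNorm ((hPSD.sqrt⁻¹ * Sᵀ) *ᵥ gradf x) ^ 2 =
      euclNorm ((S * (Sᵀ * S)⁻¹ * Sᵀ) *ᵥ gradf x) ^ 2 := by
  set g := gradf x with hg
  set P := S * (Sᵀ * S)⁻¹ * Sᵀ with hP
  set c := g ⬝ᵥ (P *ᵥ g) with hc
  have hkey' : euclNorm (P *ᵥ g) ^ 2 = c := key_eq' S hrank g
  have hkey : euclNorm ((hPSD.sqrt⁻¹ * Sᵀ) *ᵥ g) ^ 2 = c := key_eq S hPSD g
  have hc0 : 0 ≤ c := by rw [← hkey']; positivity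
  -- the step vector
  set v : Fin d → ℝ := (-α) • (P *ᵥ g) with hv
  have hxv : x + v = xp := by
    rw [hxp, hv]; funext i; simp; ring
  have hgv : g ⬝ᵥ v = -α * c := by
    rw [hv, dotProduct_smul, hc]; simp
  have hnv : euclNorm v ^ 2 = α ^ 2 * c := by
    rw [hv, euclNorm_smul, mul_pow, sq_abs, hkey', neg_pow]
    ring
  have hdesc : f xp ≤ f x + (-α * c) + L / 2 * (α ^ 2 * c) := by
    have h := descent hL.le f gradf hdiff hgrad hlip x v
    rw [hxv, hgv, hnv] at h
    exact h
  have hβL : 0 < β / L := div_pos (by linarith [hβ.1]) hL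
  have hα0 : 0 < α := lt_trans hβL hα
  have hmain : f x - f xp ≥ (2 * β - 1) / (2 * L) * c := by
    rcases hcase with h1 | h2
    · -- α ≤ 1/L
      have hαL : α * L ≤ 1 := by
        rw [le_div_iff₀ hL] at h1; linarith
      have hβα : β < α * L := by
        rw [div_lt_iff₀ hL] at hα; linarith [mul_comm α L]
      rw [ge_iff_le, div_mul_eq_mul_div, div_le_iff₀ (by linarith : (0:ℝ) < 2 * L)]
      nlinarith [mul_le_mul_of_nonneg_right hαL hc0, mul_nonneg hα0.le hc0,
        mul_nonneg (mul_nonneg hα0.le hα0.le) hc0]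
    · -- acceptance
      rw [hkey'] at h2
      have hβα : β < α * L := by
        rw [div_lt_iff₀ hL] at hα; linarith [mul_comm α L]
      rw [ge_iff_le, div_mul_eq_mul_div, div_le_iff₀ (by linarith : (0:ℝ) < 2 * L)]
      nlinarith [mul_le_mul_of_nonneg_right hβα.le hc0, mul_nonneg hα0.le hc0]
  constructor
  · rw [hkey]; exact hmain
  · rw [hkey, hkey']
end

section
/- Fix d ≥ 1, λ > 0, M ≥ 1 and k ≥ 1. Let f : ℝ^d → ℝ be differentiable, let x_1, …, x_k ∈ ℝ^d and let s_1, …, s_{k−1} ∈ ℝ^d be unit vectors. Set ℓ(k) := max{1, k − M − 1}, C_k := λ I_d + Σ_{j=ℓ(k)}^{k−1} s_j s_jᵀ, b_k := Σ_{j=ℓ(k)}^{k−1} ⟨∇f(x_j), s_j⟩ s_j and g_k := C_k⁻¹ b_k. Then for every unit vector s ∈ ℝ^d, |⟨s, ∇f(x_k) − g_k⟩| ≤ √(d(M+1)/λ) · Σ_{i=ℓ(k)}^{k−1} ‖∇f(x_i) − ∇f(x_{i+1})‖ + √λ · ‖∇f(x_k)‖ · ‖s‖_{C_k⁻¹}, where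 the sum is interpreted as 0 when k = 1. -/
open Matrix Finset

lemma abs_dot_le {n : ℕ} (v w : Fin n → ℝ) : |v ⬝ᵥ w| ≤ euclNorm v * euclNorm w := by
  have h := Finset.sum_mul_sq_le_sq_mul_sq Finset.univ v w
  have h2 : |v ⬝ᵥ w| = Real.sqrt ((v ⬝ᵥ w) ^ 2) := (Real.sqrt_sq_eq_abs _).symm
  rw [h2, euclNorm, euclNorm, ← Real.sqrt_mul (Finset.sum_nonneg fun i _ => sq_nonneg _)]
  exact Real.sqrt_le_sqrt h

lemma euclNorm_triangle {n : ℕ} (u v : Fin n → ℝ) :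
    euclNorm (u + v) ≤ euclNorm u + euclNorm v := by
  have h1 : (u + v) ⬝ᵥ (u + v) = u ⬝ᵥ u + 2 * (u ⬝ᵥ v) + v ⬝ᵥ v := by
    simp [add_dotProduct, dotProduct_add, dotProduct_comm v u]; ring
  nlinarith [euclNorm_nonneg (u + v), euclNorm_nonneg u, euclNorm_nonneg v,
    abs_dot_le u v, le_abs_self (u ⬝ᵥ v), euclNorm_sq (u + v), euclNorm_sq u, euclNorm_sq v]

lemma tele {n : ℕ} (G : ℕ → Fin n → ℝ) (a : ℕ) :
    ∀ b, a ≤ b → euclNorm (G b - G a) ≤ ∑ i ∈ Finset.Ico a b, euclNorm (G i - G (i + 1)) := by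
  intro b
  induction b with
  | zero => intro h; interval_cases a; simp [euclNorm]
  | succ b ih =>
    intro h
    rcases Nat.lt_or_ge a (b+1) with h' | h'
    · have hab : a ≤ b := Nat.lt_succ_iff.mp h'
      rw [Finset.sum_Ico_succ_top hab]
      have he : G (b+1) - G a = (G b - G a) + (G (b+1) - G b) := by ring
      rw [he]
      have ht := euclNorm_triangle (G b - G a) (G (b+1) - G b)
      have hsym : euclNorm (G (b+1) - G b) = euclNorm (G b - G (b+1)) := by
        rw [euclNorm, euclNorm]; congr 1; apply Finset.sum_congr rfl; intro i _
        simp [sub_sq']; ring_nf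
      calc _ ≤ euclNorm (G b - G a) + euclNorm (G (b+1) - G b) := ht
        _ ≤ _ := by rw [hsym]; exact add_le_add_left (ih hab) _
    · have : a = b + 1 := le_antisymm h h'
      subst this; simp [euclNorm]

lemma vecMulVec_mulVec' {n : ℕ} (u v : Fin n → ℝ) :
    vecMulVec u u *ᵥ v = (u ⬝ᵥ v) • u := by
  funext i
  simp [mulVec, vecMulVec_apply, dotProduct, Finset.mul_sum, Finset.sum_mul]
  exact Finset.sum_congr rfl fun j _ => by ring

lemma trace_mul_vecMulVec {n : ℕ} (B : Matrix (Fin n) (Fin n) ℝ) (u : Fin n → ℝ) :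
    (B * vecMulVec u u).trace = u ⬝ᵥ (B *ᵥ u) := by
  simp [Matrix.trace, Matrix.mul_apply, vecMulVec_apply, dotProduct, mulVec,
    Matrix.diag, Finset.mul_sum]
  exact Finset.sum_congr rfl fun i _ => Finset.sum_congr rfl fun j _ => by ring

open scoped MatrixOrder in
lemma psd_cs {n : ℕ} {B : Matrix (Fin n) (Fin n) ℝ} (hB : B.PosSemidef) (u v : Fin n → ℝ) :
    |u ⬝ᵥ (B *ᵥ v)| ≤ Real.sqrt (u ⬝ᵥ (B *ᵥ u)) * Real.sqrt (v ⬝ᵥ (B *ᵥ v)) := by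
  classical
  set S := CFC.sqrt B with hS
  have hSh : Sᵀ = S := by
    have := (CFC.sqrt_nonneg B).posSemidef.1
    rwa [IsHermitian, conjTranspose_eq_transpose_of_trivial] at this
  have hSS : S * S = B := CFC.sqrt_mul_sqrt_self B hB.nonneg
  have key : ∀ a b : Fin n → ℝ, a ⬝ᵥ (B *ᵥ b) = (S *ᵥ a) ⬝ᵥ (S *ᵥ b) := by
    intro a b
    rw [← hSS, ← Matrix.mulVec_mulVec, Matrix.dotProduct_mulVec a S,
      ← Matrix.mulVec_transpose, hSh]
  rw [key u v, key u u, key v v]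
  calc |(S *ᵥ u) ⬝ᵥ (S *ᵥ v)| ≤ euclNorm (S *ᵥ u) * euclNorm (S *ᵥ v) := abs_dot_le _ _
    _ = _ := by
        rw [← Real.sqrt_sq (euclNorm_nonneg (S *ᵥ u)), ← Real.sqrt_sq (euclNorm_nonneg (S *ᵥ v)),
          euclNorm_sq, euclNorm_sq]

lemma sum_mulVec' {n : ℕ} {ι : Type*} (F : Finset ι) (A : ι → Matrix (Fin n) (Fin n) ℝ)
    (v : Fin n → ℝ) : (∑ j ∈ F, A j) *ᵥ v = ∑ j ∈ F, A j *ᵥ v := by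
  funext i
  simp only [mulVec, dotProduct, Matrix.sum_apply, Finset.sum_apply, Finset.sum_mul]
  exact Finset.sum_comm

lemma mulVec_sum' {n : ℕ} {ι : Type*} (B : Matrix (Fin n) (Fin n) ℝ) (F : Finset ι)
    (f : ι → Fin n → ℝ) : B *ᵥ (∑ j ∈ F, f j) = ∑ j ∈ F, B *ᵥ f j := by
  simp only [← Matrix.mulVecLin_apply, map_sum]

lemma dotProduct_sum' {n : ℕ} {ι : Type*} (v : Fin n → ℝ) (F : Finset ι)
    (f : ι → Fin n → ℝ) : v ⬝ᵥ (∑ j ∈ F, f j) = ∑ j ∈ F, v ⬝ᵥ f j := by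
  simp only [dotProduct, Finset.sum_apply, Finset.mul_sum]
  exact Finset.sum_comm

/-- Gradient estimation error of the sliding-window regularized least-squares
estimator (Lemma 3.1). -/
theorem stmt_4 (d M k : ℕ) (hd : 1 ≤ d) (hM : 1 ≤ M) (hk : 1 ≤ k)
    (lam : ℝ) (hlam : 0 < lam)
    (f : (Fin d → ℝ) → ℝ) (gradf : (Fin d → ℝ) → Fin d → ℝ)
    (hdiff : Differentiable ℝ f)
    (hgrad : ∀ x v, fderiv ℝ f x v = gradf x ⬝ᵥ v)
    (x : ℕ → Fin d → ℝ) (s : ℕ → Fin d → ℝ)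
    (hs : ∀ j ∈ Finset.Icc 1 (k - 1), euclNorm (s j) = 1)
    (C : Matrix (Fin d) (Fin d) ℝ) (b gk : Fin d → ℝ)
    (hC : C = lam • (1 : Matrix (Fin d) (Fin d) ℝ) +
      ∑ j ∈ Finset.Icc (max 1 (k - M - 1)) (k - 1), vecMulVec (s j) (s j))
    (hb : b = ∑ j ∈ Finset.Icc (max 1 (k - M - 1)) (k - 1), (gradf (x j) ⬝ᵥ s j) • s j)
    (hgk : gk = C⁻¹ *ᵥ b) :
    ∀ sv : Fin d → ℝ, euclNorm sv = 1 →
      |sv ⬝ᵥ (gradf (x k) - gk)| ≤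
        Real.sqrt ((d : ℝ) * ((M : ℝ) + 1) / lam) *
          (∑ i ∈ Finset.Icc (max 1 (k - M - 1)) (k - 1),
            euclNorm (gradf (x i) - gradf (x (i + 1)))) +
        Real.sqrt lam * euclNorm (gradf (x k)) * Real.sqrt (sv ⬝ᵥ (C⁻¹ *ᵥ sv)) := by
  classical
  intro sv hsv
  set ℓ : ℕ := max 1 (k - M - 1) with hℓ
  have hℓ1 : 1 ≤ ℓ := le_max_left _ _
  have hℓ2 : k - M - 1 ≤ ℓ := le_max_right _ _
  set F : Finset ℕ := Finset.Icc ℓ (k - 1) with hFdef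
  set g : Fin d → ℝ := gradf (x k) with hgdef
  set T : ℝ := ∑ i ∈ F, euclNorm (gradf (x i) - gradf (x (i + 1))) with hTdef
  have hTnn : 0 ≤ T := Finset.sum_nonneg fun i _ => euclNorm_nonneg _
  -- basic structure of C
  have hmv : ∀ v, C *ᵥ v = lam • v + ∑ j ∈ F, (s j ⬝ᵥ v) • s j := by
    intro v
    rw [hC, Matrix.add_mulVec, Matrix.smul_mulVec, Matrix.one_mulVec, sum_mulVec']
    congr 1
    exact Finset.sum_congr rfl fun j _ => vecMulVec_mulVec' _ _
  have hquad : ∀ v, lam * (v ⬝ᵥ v) ≤ v ⬝ᵥ (C *ᵥ v) := by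
    intro v
    rw [hmv, dotProduct_add, dotProduct_smul, smul_eq_mul, dotProduct_sum' v]
    have h0 : 0 ≤ ∑ j ∈ F, v ⬝ᵥ ((s j ⬝ᵥ v) • s j) := by
      apply Finset.sum_nonneg
      intro j _
      rw [dotProduct_smul, smul_eq_mul, dotProduct_comm]
      exact mul_self_nonneg _
    linarith
  have hdotpos : ∀ v : Fin d → ℝ, v ≠ 0 → 0 < v ⬝ᵥ v := by
    intro v hv
    rcases Function.ne_iff.mp hv with ⟨i, hi⟩
    have hi' : v i ≠ 0 := by simpa using hi
    have hpos : (0:ℝ) < v i * v i := mul_self_pos.mpr hi'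
    have hsum : v ⬝ᵥ v = ∑ j, v j * v j := rfl
    rw [hsum]
    exact Finset.sum_pos' (fun j _ => mul_self_nonneg _) ⟨i, Finset.mem_univ i, hpos⟩
  have hCherm : C.IsHermitian := by
    rw [hC]
    ext i j
    simp only [conjTranspose_apply, Matrix.add_apply, Matrix.smul_apply, Matrix.one_apply,
      Matrix.sum_apply, vecMulVec_apply, star_trivial, smul_eq_mul]
    by_cases h : i = j
    · subst h; exact congrArg _ (Finset.sum_congr rfl fun l _ => by ring)
    · rw [if_neg (fun h' => h h'.symm), if_neg h]
      exact congrArg _ (Finset.sum_congr rfl fun l _ => by ring)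
  have hCpd : C.PosDef := by
    refine Matrix.PosDef.of_dotProduct_mulVec_pos hCherm fun v hv => ?_
    have h1 := hquad v
    have h2 := hdotpos v hv
    have hst : star v = v := by funext i; simp
    rw [hst]
    nlinarith
  have hdet : IsUnit C.det := (Matrix.isUnit_iff_isUnit_det _).mp hCpd.isUnit
  set B : Matrix (Fin d) (Fin d) ℝ := C⁻¹ with hBdef
  have hCB : C * B = 1 := Matrix.mul_nonsing_inv C hdet
  have hBC : B * C = 1 := Matrix.nonsing_inv_mul C hdet
  have hBpd : B.PosDef := hCpd.inv
  have hBnn : ∀ v, 0 ≤ v ⬝ᵥ (B *ᵥ v) := by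
    intro v
    have := hBpd.posSemidef.dotProduct_mulVec_nonneg v
    simpa using this
  have hCBv : ∀ v, C *ᵥ (B *ᵥ v) = v := by
    intro v; rw [Matrix.mulVec_mulVec, hCB, Matrix.one_mulVec]
  have hBCv : ∀ v, B *ᵥ (C *ᵥ v) = v := by
    intro v; rw [Matrix.mulVec_mulVec, hBC, Matrix.one_mulVec]
  -- q1 : lam * ‖B v‖² ≤ vᵀ B v
  have q1 : ∀ v, lam * euclNorm (B *ᵥ v) ^ 2 ≤ v ⬝ᵥ (B *ᵥ v) := by
    intro v
    have h1 := hquad (B *ᵥ v)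
    rw [hCBv v] at h1
    rw [euclNorm_sq]
    calc lam * ((B *ᵥ v) ⬝ᵥ (B *ᵥ v)) ≤ (B *ᵥ v) ⬝ᵥ v := h1
      _ = v ⬝ᵥ (B *ᵥ v) := dotProduct_comm _ _
  -- q2 : vᵀ B v ≤ ‖v‖²/lam
  have q2 : ∀ v, v ⬝ᵥ (B *ᵥ v) ≤ euclNorm v ^ 2 / lam := by
    intro v
    have h1 := q1 v
    have h2 : |v ⬝ᵥ (B *ᵥ v)| ≤ euclNorm v * euclNorm (B *ᵥ v) := abs_dot_le _ _
    have h2' : v ⬝ᵥ (B *ᵥ v) ≤ euclNorm v * euclNorm (B *ᵥ v) :=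
      (le_abs_self _).trans h2
    have h4 := hBnn v
    have h5 := euclNorm_nonneg v
    have h6 := euclNorm_nonneg (B *ᵥ v)
    rw [le_div_iff₀ hlam]
    have key1 : (v ⬝ᵥ (B *ᵥ v)) * (v ⬝ᵥ (B *ᵥ v)) ≤
        (euclNorm v * euclNorm (B *ᵥ v)) * (euclNorm v * euclNorm (B *ᵥ v)) :=
      mul_le_mul h2' h2' h4 (mul_nonneg h5 h6)
    have key2 : (lam * euclNorm (B *ᵥ v) ^ 2) * (euclNorm v * euclNorm v) ≤
        (v ⬝ᵥ (B *ᵥ v)) * (euclNorm v * euclNorm v) :=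
      mul_le_mul_of_nonneg_right h1 (mul_nonneg h5 h5)
    rcases eq_or_lt_of_le h4 with h|h
    · rw [← h]; simpa using sq_nonneg (euclNorm v)
    · have hchain : (v ⬝ᵥ (B *ᵥ v)) * ((v ⬝ᵥ (B *ᵥ v)) * lam) ≤
          (v ⬝ᵥ (B *ᵥ v)) * (euclNorm v ^ 2) := by
        nlinarith [key1, key2, hlam.le]
      have := le_of_mul_le_mul_left hchain h
      linarith
  -- trace bound
  have htr : ∑ j ∈ F, s j ⬝ᵥ (B *ᵥ s j) ≤ (d : ℝ) := by
    have hsplit : (∑ j ∈ F, vecMulVec (s j) (s j)) = C - lam • 1 := by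
      rw [hC]; exact (add_sub_cancel_left _ _).symm
    have h1 : ∑ j ∈ F, s j ⬝ᵥ (B *ᵥ s j) = (B * (C - lam • 1)).trace := by
      rw [← hsplit, Finset.mul_sum, Matrix.trace_sum]
      exact Finset.sum_congr rfl fun j _ => (trace_mul_vecMulVec B (s j)).symm
    have h2 : (B * (C - lam • 1)).trace = (d : ℝ) - lam * B.trace := by
      rw [mul_sub, Matrix.trace_sub, hBC, Matrix.trace_one, Matrix.mul_smul, mul_one,
        Matrix.trace_smul]
      simp
    have h3 : 0 ≤ B.trace := by
      rw [Matrix.trace]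
      apply Finset.sum_nonneg
      intro i _
      have := hBnn (Pi.single i 1)
      simpa [Matrix.mulVec_single, single_dotProduct, Matrix.diag] using this
    rw [h1, h2]
    nlinarith
  -- cardinality
  have hcard : (F.card : ℝ) ≤ (M : ℝ) + 1 := by
    have h1 : F.card ≤ M + 1 := by
      rw [hFdef, Nat.card_Icc]
      omega
    calc (F.card : ℝ) ≤ ((M + 1 : ℕ) : ℝ) := Nat.cast_le.mpr h1
      _ = (M : ℝ) + 1 := by push_cast; ring
  -- sum of norms bound
  have hsumnorm : ∑ j ∈ F, euclNorm (B *ᵥ s j) ≤ Real.sqrt ((d : ℝ) * ((M : ℝ) + 1) / lam) := by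
    have hs2 : ∑ j ∈ F, euclNorm (B *ᵥ s j) ^ 2 ≤ (d : ℝ) / lam := by
      have each : ∀ j ∈ F, euclNorm (B *ᵥ s j) ^ 2 ≤ (s j ⬝ᵥ (B *ᵥ s j)) / lam := by
        intro j _
        rw [le_div_iff₀ hlam, mul_comm]
        exact q1 (s j)
      calc ∑ j ∈ F, euclNorm (B *ᵥ s j) ^ 2 ≤ ∑ j ∈ F, (s j ⬝ᵥ (B *ᵥ s j)) / lam :=
            Finset.sum_le_sum each
        _ = (∑ j ∈ F, s j ⬝ᵥ (B *ᵥ s j)) / lam := by rw [Finset.sum_div]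
        _ ≤ (d : ℝ) / lam := by gcongr
    have hcs := Finset.sum_mul_sq_le_sq_mul_sq F (fun j => euclNorm (B *ᵥ s j)) (fun _ => (1:ℝ))
    simp only [mul_one, one_pow, Finset.sum_const, nsmul_eq_mul] at hcs
    have hx : 0 ≤ ∑ j ∈ F, euclNorm (B *ᵥ s j) :=
      Finset.sum_nonneg fun j _ => euclNorm_nonneg _
    rw [show (d : ℝ) * ((M : ℝ) + 1) / lam = ((M : ℝ) + 1) * ((d : ℝ) / lam) by ring]
    refine Real.le_sqrt_of_sq_le ?_
    calc (∑ j ∈ F, euclNorm (B *ᵥ s j)) ^ 2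
        ≤ (∑ j ∈ F, euclNorm (B *ᵥ s j) ^ 2) * F.card := hcs
      _ ≤ ((d : ℝ) / lam) * ((M : ℝ) + 1) := by
          apply mul_le_mul hs2 hcard (Nat.cast_nonneg _)
          positivity
      _ = ((M : ℝ) + 1) * ((d : ℝ) / lam) := by ring
  -- key identity
  have h0 : C *ᵥ (g - gk) = lam • g + ∑ j ∈ F, (((g - gradf (x j)) ⬝ᵥ s j) • s j) := by
    rw [Matrix.mulVec_sub, hgk, hCBv b, hmv g, hb, add_sub_assoc, ← Finset.sum_sub_distrib]
    congr 1
    refine Finset.sum_congr rfl fun j _ => ?_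
    rw [sub_dotProduct, dotProduct_comm g (s j), sub_smul]
  have h1 : g - gk = B *ᵥ (lam • g + ∑ j ∈ F, (((g - gradf (x j)) ⬝ᵥ s j) • s j)) := by
    rw [← h0, hBCv]
  have hkey : sv ⬝ᵥ (g - gk) = lam * (sv ⬝ᵥ (B *ᵥ g)) +
      ∑ j ∈ F, ((g - gradf (x j)) ⬝ᵥ s j) * (sv ⬝ᵥ (B *ᵥ s j)) := by
    rw [h1, Matrix.mulVec_add, dotProduct_add, Matrix.mulVec_smul, dotProduct_smul,
      smul_eq_mul, mulVec_sum', dotProduct_sum']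
    congr 1
    refine Finset.sum_congr rfl fun j _ => ?_
    rw [Matrix.mulVec_smul, dotProduct_smul, smul_eq_mul]
  -- term 1
  have hq2g : Real.sqrt (g ⬝ᵥ (B *ᵥ g)) ≤ euclNorm g / Real.sqrt lam := by
    calc Real.sqrt (g ⬝ᵥ (B *ᵥ g)) ≤ Real.sqrt (euclNorm g ^ 2 / lam) :=
      Real.sqrt_le_sqrt (q2 g)
      _ = euclNorm g / Real.sqrt lam := by
        rw [Real.sqrt_div (sq_nonneg _), Real.sqrt_sq (euclNorm_nonneg g)]
  have hterm1 : lam * |sv ⬝ᵥ (B *ᵥ g)| ≤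
      Real.sqrt lam * euclNorm g * Real.sqrt (sv ⬝ᵥ (B *ᵥ sv)) := by
    have hcs := psd_cs hBpd.posSemidef sv g
    calc lam * |sv ⬝ᵥ (B *ᵥ g)|
        ≤ lam * (Real.sqrt (sv ⬝ᵥ (B *ᵥ sv)) * Real.sqrt (g ⬝ᵥ (B *ᵥ g))) :=
          mul_le_mul_of_nonneg_left hcs hlam.le
      _ ≤ lam * (Real.sqrt (sv ⬝ᵥ (B *ᵥ sv)) * (euclNorm g / Real.sqrt lam)) := by
          apply mul_le_mul_of_nonneg_left _ hlam.le
          exact mul_le_mul_of_nonneg_left hq2g (Real.sqrt_nonneg _)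
      _ = Real.sqrt lam * euclNorm g * Real.sqrt (sv ⬝ᵥ (B *ᵥ sv)) := by
          rw [show lam * (Real.sqrt (sv ⬝ᵥ (B *ᵥ sv)) * (euclNorm g / Real.sqrt lam)) =
            (lam / Real.sqrt lam) * (euclNorm g * Real.sqrt (sv ⬝ᵥ (B *ᵥ sv))) by ring,
            Real.div_sqrt]
          ring
  -- term 2 pointwise bounds
  have habs_cj : ∀ j ∈ F, |(g - gradf (x j)) ⬝ᵥ s j| ≤ T := by
    intro j hj
    rw [hFdef, Finset.mem_Icc] at hj
    have hj1 : j ∈ Finset.Icc 1 (k - 1) := Finset.mem_Icc.mpr ⟨le_trans hℓ1 hj.1, hj.2⟩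
    have hcs := abs_dot_le (g - gradf (x j)) (s j)
    rw [hs j hj1, mul_one] at hcs
    have hjk : j ≤ k := by omega
    have htl := tele (fun i => gradf (x i)) j k hjk
    have hIco : Finset.Ico j k = Finset.Icc j (k - 1) := by
      rw [← Finset.Ico_add_one_right_eq_Icc]
      congr 1
      omega
    have hsub : Finset.Ico j k ⊆ F := by
      rw [hIco, hFdef]
      apply Finset.Icc_subset_Icc_left hj.1
    have hmono : ∑ i ∈ Finset.Ico j k, euclNorm (gradf (x i) - gradf (x (i + 1))) ≤ T :=
      Finset.sum_le_sum_of_subset_of_nonneg hsub fun i _ _ => euclNorm_nonneg _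
    calc |(g - gradf (x j)) ⬝ᵥ s j| ≤ euclNorm (g - gradf (x j)) := hcs
      _ ≤ ∑ i ∈ Finset.Ico j k, euclNorm (gradf (x i) - gradf (x (i + 1))) := htl
      _ ≤ T := hmono
  have habs_q : ∀ j, |sv ⬝ᵥ (B *ᵥ s j)| ≤ euclNorm (B *ᵥ s j) := by
    intro j
    have := abs_dot_le sv (B *ᵥ s j)
    rwa [hsv, one_mul] at this
  -- final assembly
  calc |sv ⬝ᵥ (g - gk)|
      = |lam * (sv ⬝ᵥ (B *ᵥ g)) +
          ∑ j ∈ F, ((g - gradf (x j)) ⬝ᵥ s j) * (sv ⬝ᵥ (B *ᵥ s j))| := by rw [hkey]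
    _ ≤ |lam * (sv ⬝ᵥ (B *ᵥ g))| +
          |∑ j ∈ F, ((g - gradf (x j)) ⬝ᵥ s j) * (sv ⬝ᵥ (B *ᵥ s j))| := abs_add_le _ _
    _ ≤ lam * |sv ⬝ᵥ (B *ᵥ g)| +
          ∑ j ∈ F, |((g - gradf (x j)) ⬝ᵥ s j) * (sv ⬝ᵥ (B *ᵥ s j))| := by
        apply add_le_add
        · rw [abs_mul, abs_of_pos hlam]
        · exact Finset.abs_sum_le_sum_abs _ _
    _ ≤ Real.sqrt lam * euclNorm g * Real.sqrt (sv ⬝ᵥ (B *ᵥ sv)) +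
          ∑ j ∈ F, T * euclNorm (B *ᵥ s j) := by
        apply add_le_add hterm1
        apply Finset.sum_le_sum
        intro j hj
        rw [abs_mul]
        exact mul_le_mul (habs_cj j hj) (habs_q j) (abs_nonneg _) hTnn
    _ = Real.sqrt lam * euclNorm g * Real.sqrt (sv ⬝ᵥ (B *ᵥ sv)) +
          T * ∑ j ∈ F, euclNorm (B *ᵥ s j) := by rw [Finset.mul_sum]
    _ ≤ Real.sqrt lam * euclNorm g * Real.sqrt (sv ⬝ᵥ (B *ᵥ sv)) +
          T * Real.sqrt ((d : ℝ) * ((M : ℝ) + 1) / lam) := by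
        apply add_le_add_right
        exact mul_le_mul_of_nonneg_left hsumnorm hTnn
    _ = Real.sqrt ((d : ℝ) * ((M : ℝ) + 1) / lam) * T +
          Real.sqrt lam * euclNorm g * Real.sqrt (sv ⬝ᵥ (B *ᵥ sv)) := by ring
end

section
/- Fix d ≥ 1, λ > 0 and integers ℓ ≤ k − 1. Let s_ℓ, …, s_{k−1} ∈ ℝ^d be unit vectors and set C := λ I_d + Σ_{j=ℓ}^{k−1} s_j s_jᵀ. Then for every i with ℓ ≤ i ≤ k − 1, Σ_{j=ℓ}^{i} s_jᵀ C⁻¹ s_j ≤ d. -/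
open Matrix Finset

lemma vecMulVec_posSemidef {d : ℕ} (v : Fin d → ℝ) : (vecMulVec v v).PosSemidef := by
  have h : vecMulVec v v = replicateCol (Fin 1) v * (replicateCol (Fin 1) v)ᴴ := by
    rw [vecMulVec_eq (Fin 1)]; congr 1
  rw [h]; exact posSemidef_self_mul_conjTranspose _

lemma dotProduct_mulVec_eq_trace {d : ℕ} (M : Matrix (Fin d) (Fin d) ℝ) (v : Fin d → ℝ) :
    v ⬝ᵥ (M *ᵥ v) = trace (M * vecMulVec v v) := by
  simp only [trace, diag_apply, Matrix.mul_apply, vecMulVec_apply, dotProduct, mulVec,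
    Finset.mul_sum, Finset.sum_mul]
  exact Finset.sum_congr rfl fun a _ => Finset.sum_congr rfl fun b _ => by ring

lemma trace_nonneg_of_posSemidef {d : ℕ} {M : Matrix (Fin d) (Fin d) ℝ}
    (hM : M.PosSemidef) : 0 ≤ trace M := by
  refine Finset.sum_nonneg fun a _ => ?_
  have := hM.dotProduct_mulVec_nonneg (Pi.single a 1)
  simpa [dotProduct, mulVec, Pi.single_apply] using this

/-- Trace bound: partial sums of squared Mahalanobis norms of the measurement
directions with respect to the inverse covariance are at most `d`. -/
theorem stmt_7 (d : ℕ) (hd : 1 ≤ d) (lam : ℝ) (hlam : 0 < lam)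
    (ℓ k : ℕ) (hk : 1 ≤ k) (hℓ : ℓ ≤ k - 1)
    (s : ℕ → Fin d → ℝ)
    (hs : ∀ j ∈ Finset.Icc ℓ (k - 1), euclNorm (s j) = 1) :
    ∀ i, ℓ ≤ i → i ≤ k - 1 →
      ∑ j ∈ Finset.Icc ℓ i,
        s j ⬝ᵥ ((lam • (1 : Matrix (Fin d) (Fin d) ℝ) +
          ∑ j' ∈ Finset.Icc ℓ (k - 1), vecMulVec (s j') (s j'))⁻¹ *ᵥ s j) ≤ (d : ℝ) := by
  intro i hℓi hik
  set S : Matrix (Fin d) (Fin d) ℝ := ∑ j' ∈ Finset.Icc ℓ (k - 1), vecMulVec (s j') (s j')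
    with hSdef
  set C : Matrix (Fin d) (Fin d) ℝ := lam • (1 : Matrix (Fin d) (Fin d) ℝ) + S with hCdef
  have hS : S.PosSemidef := by
    rw [hSdef]
    exact Finset.sum_induction _ _ (fun A B hA hB => hA.add hB) (Matrix.PosSemidef.zero)
      (fun j _ => vecMulVec_posSemidef (s j))
  have hlam1 : (lam • (1 : Matrix (Fin d) (Fin d) ℝ)).PosDef := by
    rw [smul_one_eq_diagonal]
    exact posDef_diagonal_iff.mpr fun _ => hlam
  have hC : C.PosDef := hlam1.add_posSemidef hS
  have hCinv : (C⁻¹).PosDef := hC.inv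
  have hterm : ∀ j, 0 ≤ s j ⬝ᵥ (C⁻¹ *ᵥ s j) := fun j => by
    simpa using hCinv.posSemidef.dotProduct_mulVec_nonneg (s j)
  have hsubset : Finset.Icc ℓ i ⊆ Finset.Icc ℓ (k - 1) :=
    Finset.Icc_subset_Icc_right hik
  have hmono : ∑ j ∈ Finset.Icc ℓ i, s j ⬝ᵥ (C⁻¹ *ᵥ s j)
      ≤ ∑ j ∈ Finset.Icc ℓ (k - 1), s j ⬝ᵥ (C⁻¹ *ᵥ s j) :=
    Finset.sum_le_sum_of_subset_of_nonneg hsubset fun j _ _ => hterm j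
  have hfull : ∑ j ∈ Finset.Icc ℓ (k - 1), s j ⬝ᵥ (C⁻¹ *ᵥ s j)
      = trace (C⁻¹ * S) := by
    rw [hSdef, Finset.mul_sum, trace_sum]
    exact Finset.sum_congr rfl fun j _ => dotProduct_mulVec_eq_trace _ _
  have hdet : IsUnit C.det := (Matrix.isUnit_iff_isUnit_det _).mp hC.isUnit
  have hCS : C⁻¹ * S = 1 - lam • C⁻¹ := by
    have h1 : S = C - lam • (1 : Matrix (Fin d) (Fin d) ℝ) := by
      rw [hCdef]; abel
    rw [h1, Matrix.mul_sub, Matrix.nonsing_inv_mul C hdet, Matrix.mul_smul, Matrix.mul_one]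
  have htr : trace (C⁻¹ * S) = (d : ℝ) - lam * trace C⁻¹ := by
    rw [hCS, trace_sub, trace_smul, trace_one]
    simp
  have htrinv : 0 ≤ trace C⁻¹ := trace_nonneg_of_posSemidef hCinv.posSemidef
  calc ∑ j ∈ Finset.Icc ℓ i, s j ⬝ᵥ (C⁻¹ *ᵥ s j)
      ≤ ∑ j ∈ Finset.Icc ℓ (k - 1), s j ⬝ᵥ (C⁻¹ *ᵥ s j) := hmono
    _ = trace (C⁻¹ * S) := hfull
    _ = (d : ℝ) - lam * trace C⁻¹ := htr
    _ ≤ (d : ℝ) := by nlinarith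
end

section
/- Fix d ≥ 1, λ > 0 and integers ℓ ≤ k − 1. Let s_ℓ, …, s_{k−1} ∈ ℝ^d be unit vectors and set C := λ I_d + Σ_{j=ℓ}^{k−1} s_j s_jᵀ. Then for every i with ℓ ≤ i ≤ k − 1, the spectral norm of C⁻¹ A_i, where A_i := Σ_{j=ℓ}^{i} s_j s_jᵀ, satisfies ‖C⁻¹ A_i‖ ≤ √(d (i − ℓ + 1)/λ). -/
open Matrix Finset

private lemma aux_sum_mulVec {d : ℕ} (t : Finset ℕ) (M : ℕ → Matrix (Fin d) (Fin d) ℝ)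
    (y : Fin d → ℝ) : (∑ j ∈ t, M j) *ᵥ y = ∑ j ∈ t, (M j *ᵥ y) := by
  ext i
  simp only [mulVec, dotProduct, Matrix.sum_apply, Finset.sum_mul, Finset.sum_apply]
  rw [Finset.sum_comm]

private lemma aux_vecMulVec_mulVec {d : ℕ} (v w y : Fin d → ℝ) :
    vecMulVec v w *ᵥ y = (w ⬝ᵥ y) • v := by
  ext i
  simp only [vecMulVec_apply, mulVec, dotProduct, Pi.smul_apply, smul_eq_mul, Finset.sum_mul,
    Finset.mul_sum]
  exact Finset.sum_congr rfl fun j _ => by ring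

private lemma aux_dot_sum {d : ℕ} (t : Finset ℕ) (y : ℕ → Fin d → ℝ) (x : Fin d → ℝ) :
    x ⬝ᵥ (∑ j ∈ t, y j) = ∑ j ∈ t, x ⬝ᵥ y j := by
  simp only [dotProduct, Finset.sum_apply, Finset.mul_sum]
  rw [Finset.sum_comm]

private lemma aux_quad {d : ℕ} (t : Finset ℕ) (s : ℕ → Fin d → ℝ) (x y : Fin d → ℝ) :
    x ⬝ᵥ ((∑ j ∈ t, vecMulVec (s j) (s j)) *ᵥ y) = ∑ j ∈ t, (s j ⬝ᵥ x) * (s j ⬝ᵥ y) := by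
  rw [aux_sum_mulVec, aux_dot_sum]
  refine Finset.sum_congr rfl fun j _ => ?_
  rw [aux_vecMulVec_mulVec, dotProduct_smul, smul_eq_mul, dotProduct_comm x (s j)]
  exact mul_comm _ _

private lemma aux_dot_self_nonneg {d : ℕ} (x : Fin d → ℝ) : 0 ≤ x ⬝ᵥ x :=
  Finset.sum_nonneg fun i _ => mul_self_nonneg _

/-- Spectral norm bound `‖C⁻¹ Aᵢ‖ ≤ √(d(i − ℓ + 1)/λ)` from the proof of Lemma 3.1. -/
theorem stmt_8 (d : ℕ) (hd : 1 ≤ d) (lam : ℝ) (hlam : 0 < lam)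
    (ℓ k : ℕ) (hk : 1 ≤ k) (hℓ : ℓ ≤ k - 1)
    (s : ℕ → Fin d → ℝ)
    (hs : ∀ j ∈ Finset.Icc ℓ (k - 1), euclNorm (s j) = 1) :
    ∀ i, ℓ ≤ i → i ≤ k - 1 →
      ‖Matrix.toEuclideanCLM (𝕜 := ℝ)
        ((lam • (1 : Matrix (Fin d) (Fin d) ℝ) +
            ∑ j' ∈ Finset.Icc ℓ (k - 1), vecMulVec (s j') (s j'))⁻¹ *
          (∑ j ∈ Finset.Icc ℓ i, vecMulVec (s j) (s j)))‖ ≤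
      Real.sqrt ((d : ℝ) * ((i : ℝ) - (ℓ : ℝ) + 1) / lam) := by
  intro i hℓi hik
  set t : Finset ℕ := Finset.Icc ℓ (k - 1) with ht
  set u : Finset ℕ := Finset.Icc ℓ i with hu
  set S : Matrix (Fin d) (Fin d) ℝ := ∑ j' ∈ t, vecMulVec (s j') (s j') with hS
  set C : Matrix (Fin d) (Fin d) ℝ := lam • (1 : Matrix (Fin d) (Fin d) ℝ) + S with hC
  set A : Matrix (Fin d) (Fin d) ℝ := ∑ j ∈ u, vecMulVec (s j) (s j) with hA
  have hsub : u ⊆ t := Finset.Icc_subset_Icc le_rfl hik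
  set m : ℝ := (i : ℝ) - (ℓ : ℝ) + 1 with hm
  have hm1 : (1 : ℝ) ≤ m := by
    have : (ℓ : ℝ) ≤ (i : ℝ) := by exact_mod_cast hℓi
    simp [hm]; linarith
  have hcard : (u.card : ℝ) = m := by
    rw [hu, Nat.card_Icc]
    have : ℓ ≤ i + 1 := hℓi.trans (Nat.le_succ i)
    push_cast [Nat.cast_sub this]
    ring
  -- unit norms
  have hunit : ∀ j ∈ t, s j ⬝ᵥ s j = 1 := by
    intro j hj
    have h1 := hs j hj
    rw [euclNorm] at h1
    have h2 : (0:ℝ) ≤ ∑ a, s j a ^ 2 := Finset.sum_nonneg fun a _ => sq_nonneg _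
    have h3 : ∑ a, s j a ^ 2 = 1 := by
      have := Real.sqrt_eq_one.mp h1
      exact this
    simpa [dotProduct, sq] using h3
  -- quadratic form of C
  have hQC : ∀ x y : Fin d → ℝ,
      x ⬝ᵥ (C *ᵥ y) = lam * (x ⬝ᵥ y) + ∑ j ∈ t, (s j ⬝ᵥ x) * (s j ⬝ᵥ y) := by
    intro x y
    rw [hC, add_mulVec, smul_mulVec, one_mulVec, dotProduct_add, dotProduct_smul,
      smul_eq_mul, hS, aux_quad]
  have hQA : ∀ x y : Fin d → ℝ,
      x ⬝ᵥ (A *ᵥ y) = ∑ j ∈ u, (s j ⬝ᵥ x) * (s j ⬝ᵥ y) := by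
    intro x y
    rw [hA, aux_quad]
  -- C is positive definite
  have hCH : C.IsHermitian := by
    rw [Matrix.IsHermitian]
    ext a b
    simp only [hC, hS, Matrix.conjTranspose_apply, Matrix.add_apply, Matrix.smul_apply,
      Matrix.one_apply, Matrix.sum_apply, vecMulVec_apply, star_trivial, smul_eq_mul]
    have h1 : (if b = a then (1:ℝ) else 0) = (if a = b then 1 else 0) := by simp [eq_comm]
    rw [h1, Finset.sum_congr rfl fun j _ => mul_comm (s j b) (s j a)]
  have hPD : C.PosDef := by
    refine Matrix.PosDef.of_dotProduct_mulVec_pos hCH fun x hx => ?_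
    have hxx : 0 < x ⬝ᵥ x := by
      rcases lt_or_eq_of_le (aux_dot_self_nonneg x) with h | h
      · exact h
      · exact absurd (dotProduct_self_eq_zero.mp h.symm) hx
    have : 0 < x ⬝ᵥ (C *ᵥ x) := by
      rw [hQC]
      have hsq : 0 ≤ ∑ j ∈ t, (s j ⬝ᵥ x) * (s j ⬝ᵥ x) :=
        Finset.sum_nonneg fun j _ => mul_self_nonneg _
      nlinarith
    simpa using this
  have hdet : IsUnit C.det := hPD.det_pos.ne'.isUnit
  have hCCinv : C * C⁻¹ = 1 := Matrix.mul_nonsing_inv _ hdet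
  -- key pointwise bound
  have key : ∀ x : Fin d → ℝ,
      lam * (((C⁻¹ * A) *ᵥ x) ⬝ᵥ ((C⁻¹ * A) *ᵥ x)) ≤ m * (x ⬝ᵥ x) := by
    intro x
    set y : Fin d → ℝ := (C⁻¹ * A) *ᵥ x with hy
    have hCy : C *ᵥ y = A *ᵥ x := by
      rw [hy, mulVec_mulVec, ← Matrix.mul_assoc, hCCinv, Matrix.one_mul]
    set q : ℝ := y ⬝ᵥ (C *ᵥ y) with hq
    have hq1 : lam * (y ⬝ᵥ y) ≤ q := by
      rw [hq, hQC]
      have : 0 ≤ ∑ j ∈ t, (s j ⬝ᵥ y) * (s j ⬝ᵥ y) :=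
        Finset.sum_nonneg fun j _ => mul_self_nonneg _
      linarith
    have hAyq : y ⬝ᵥ (A *ᵥ y) ≤ q := by
      rw [hq, hQC, hQA]
      have h1 : ∑ j ∈ u, (s j ⬝ᵥ y) * (s j ⬝ᵥ y) ≤ ∑ j ∈ t, (s j ⬝ᵥ y) * (s j ⬝ᵥ y) :=
        Finset.sum_le_sum_of_subset_of_nonneg hsub fun j _ _ => mul_self_nonneg _
      have h2 : 0 ≤ lam * (y ⬝ᵥ y) := mul_nonneg hlam.le (aux_dot_self_nonneg y)
      linarith
    have hAx : x ⬝ᵥ (A *ᵥ x) ≤ m * (x ⬝ᵥ x) := by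
      rw [hQA]
      have hterm : ∀ j ∈ u, (s j ⬝ᵥ x) * (s j ⬝ᵥ x) ≤ x ⬝ᵥ x := by
        intro j hj
        have hcs := Finset.sum_mul_sq_le_sq_mul_sq Finset.univ (s j) x
        have h1 : (∑ a, s j a ^ 2) = 1 := by
          have := hunit j (hsub hj)
          simpa [dotProduct, sq] using this
        have h2 : (∑ a, s j a * x a) ^ 2 ≤ ∑ a, x a ^ 2 := by
          rw [h1, one_mul] at hcs; exact hcs
        have h3 : (s j ⬝ᵥ x) * (s j ⬝ᵥ x) = (∑ a, s j a * x a) ^ 2 := by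
          simp [dotProduct, sq]
        have h4 : x ⬝ᵥ x = ∑ a, x a ^ 2 := by simp [dotProduct, sq]
        rw [h3, h4]; exact h2
      calc ∑ j ∈ u, (s j ⬝ᵥ x) * (s j ⬝ᵥ x) ≤ u.card • (x ⬝ᵥ x) :=
              Finset.sum_le_card_nsmul u _ _ hterm
        _ = (u.card : ℝ) * (x ⬝ᵥ x) := nsmul_eq_mul _ _
        _ = m * (x ⬝ᵥ x) := by rw [hcard]
    -- Cauchy–Schwarz for the form A
    have hcs2 : q ^ 2 ≤ (y ⬝ᵥ (A *ᵥ y)) * (x ⬝ᵥ (A *ᵥ x)) := by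
      have hqalt : q = ∑ j ∈ u, (s j ⬝ᵥ y) * (s j ⬝ᵥ x) := by
        rw [hq, hCy, hQA]
      have := Finset.sum_mul_sq_le_sq_mul_sq u (fun j => s j ⬝ᵥ y) (fun j => s j ⬝ᵥ x)
      rw [hqalt, hQA, hQA]
      have e1 : ∑ j ∈ u, (s j ⬝ᵥ y) * (s j ⬝ᵥ y) = ∑ j ∈ u, (s j ⬝ᵥ y) ^ 2 := by
        simp [sq]
      have e2 : ∑ j ∈ u, (s j ⬝ᵥ x) * (s j ⬝ᵥ x) = ∑ j ∈ u, (s j ⬝ᵥ x) ^ 2 := by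
        simp [sq]
      rw [e1, e2]; exact this
    have hAynn : 0 ≤ y ⬝ᵥ (A *ᵥ y) := by
      rw [hQA]; exact Finset.sum_nonneg fun j _ => mul_self_nonneg _
    have hAxnn : 0 ≤ x ⬝ᵥ (A *ᵥ x) := by
      rw [hQA]; exact Finset.sum_nonneg fun j _ => mul_self_nonneg _
    have hyynn : 0 ≤ y ⬝ᵥ y := aux_dot_self_nonneg y
    have hxxnn : 0 ≤ x ⬝ᵥ x := aux_dot_self_nonneg x
    -- combine: q² ≤ q * (m * x⬝x), lam * y⬝y ≤ q
    nlinarith [hcs2, hAyq, hAx, hq1, mul_nonneg hlam.le hyynn,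
      mul_le_mul_of_nonneg_left hAx hAynn]
  -- conclude the operator norm bound
  refine ContinuousLinearMap.opNorm_le_bound _ (Real.sqrt_nonneg _) fun x => ?_
  have happ : ∀ a : Fin d, (toEuclideanCLM (𝕜 := ℝ) (C⁻¹ * A) x) a
      = ((C⁻¹ * A) *ᵥ fun j => x j) a :=
    fun a => congrFun (ofLp_toEuclideanCLM _ x) a
  set x' : Fin d → ℝ := fun j => x j with hx'
  set y : Fin d → ℝ := (C⁻¹ * A) *ᵥ x' with hy
  rw [EuclideanSpace.norm_eq, EuclideanSpace.norm_eq]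
  simp only [Real.norm_eq_abs, sq_abs, happ]
  have hyy : ∑ a, (y a) ^ 2 = y ⬝ᵥ y := by simp [dotProduct, sq]
  have hxx : ∑ a, (x' a) ^ 2 = x' ⬝ᵥ x' := by simp [dotProduct, sq]
  rw [← Real.sqrt_mul (by positivity) (∑ a, (x' a) ^ 2)]
  apply Real.sqrt_le_sqrt
  rw [hyy, hxx]
  have hk2 := key x'
  have hxxnn : 0 ≤ x' ⬝ᵥ x' := aux_dot_self_nonneg x'
  have hd1 : (1 : ℝ) ≤ (d : ℝ) := by exact_mod_cast hd
  rw [div_mul_eq_mul_div, le_div_iff₀ hlam]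
  nlinarith [mul_le_mul_of_nonneg_right (mul_le_mul_of_nonneg_right hd1 (le_trans zero_le_one hm1)) hxxnn]
end

section
/- Let A ∈ ℝ^{d×d} be symmetric positive definite, and let s ∈ ℝ^d satisfy sᵀ A⁻¹ s ≤ 1. Then sᵀ A⁻¹ s ≤ 2 log( det(A + s sᵀ) / det(A) ). -/
open Matrix Finset

/-- Per-step potential inequality: for `A` positive definite and `sᵀA⁻¹s ≤ 1`,
`sᵀA⁻¹s ≤ 2 log(det(A + ssᵀ)/det A)`. -/
theorem stmt_9 (d : ℕ) (A : Matrix (Fin d) (Fin d) ℝ) (hA : A.PosDef)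
    (s : Fin d → ℝ) (hs : s ⬝ᵥ (A⁻¹ *ᵥ s) ≤ 1) :
    s ⬝ᵥ (A⁻¹ *ᵥ s) ≤ 2 * Real.log ((A + vecMulVec s s).det / A.det) := by
  set y := s ⬝ᵥ (A⁻¹ *ᵥ s) with hy
  have hy0 : 0 ≤ y := by
    have := hA.inv.posSemidef.re_dotProduct_nonneg s
    simpa using this
  have hdet : (A + vecMulVec s s).det = A.det * (1 + y) := by
    rw [vecMulVec_eq (Fin 1) s s,
      det_add_replicateCol_mul_replicateRow (isUnit_iff_ne_zero.mpr hA.det_pos.ne') s s]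
    congr 1
    refine Eq.trans (@Matrix.det_unique _ _ _ _ (fun a b => decidableEq_of_subsingleton a b) _ _) ?_
    rw [Matrix.mul_assoc]
    simp [Matrix.add_apply, Matrix.one_apply, Matrix.mul_apply, Matrix.replicateRow_apply,
      Matrix.replicateCol_apply, hy, dotProduct, mulVec]
  have hApos : 0 < A.det := hA.det_pos
  have hratio : (A + vecMulVec s s).det / A.det = 1 + y := by
    rw [hdet]; field_simp
  rw [hratio]
  have h1y : (0:ℝ) < 1 + y := by linarith
  have hexp : Real.exp (y / 2) ≤ 1 + y := by
    have h2 : -(y/2) + 1 ≤ Real.exp (-(y/2)) := Real.add_one_le_exp _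
    have h3 : Real.exp (y/2) * Real.exp (-(y/2)) = 1 := by
      rw [← Real.exp_add]; simp
    have h4 : 0 < Real.exp (y/2) := Real.exp_pos _
    nlinarith [Real.exp_pos (-(y/2))]
  have hlog : y / 2 ≤ Real.log (1 + y) := by
    rw [← Real.log_exp (y/2)]
    exact Real.log_le_log (Real.exp_pos _) hexp
  linarith
end
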